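/- Let n, k, l ∈ ℕ, let Y ∈ ℝ^{n×k} and V₁ ∈ ℝ^{l×k} with V₁ᵀ V₁ = I_k, set ℬ := Y V₁ᵀ ∈ ℝ^{n×l}, and let 𝒞 ∈ ℝ^{k×n} be such that 𝒞 Y ∈ ℝ^{k×k} is invertible. Then: (a) 𝒞ℬ (𝒞ℬ)ᵀ = (𝒞Y)(𝒞Y)ᵀ is invertible; (b) ℬ (𝒞ℬ)† = Y (𝒞Y)⁻¹, where (𝒞ℬ)† := (𝒞ℬ)ᵀ (𝒞ℬ (𝒞ℬ)ᵀ)⁻¹; and (c) ℬ (𝒞ℬ)† 𝒞 ℬ = ℬ, i.e., (I_n − ℬ (𝒞ℬ)† 𝒞) ℬ = 0. -/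
import Mathlib


open Matrix

theorem stmt7 (n k l : ℕ) (Y : Matrix (Fin n) (Fin k) ℝ) (V₁ : Matrix (Fin l) (Fin k) ℝ)
    (hV : V₁ᵀ * V₁ = 1) (𝒞 : Matrix (Fin k) (Fin n) ℝ) (hCY : IsUnit (𝒞 * Y)) :
    let ℬ : Matrix (Fin n) (Fin l) ℝ := Y * V₁ᵀ
    let CBdag : Matrix (Fin l) (Fin k) ℝ := (𝒞 * ℬ)ᵀ * (𝒞 * ℬ * (𝒞 * ℬ)ᵀ)⁻¹
    (𝒞 * ℬ * (𝒞 * ℬ)ᵀ = (𝒞 * Y) * (𝒞 * Y)ᵀ ∧ IsUnit (𝒞 * ℬ * (𝒞 * ℬ)ᵀ)) ∧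
    ℬ * CBdag = Y * (𝒞 * Y)⁻¹ ∧
    (ℬ * CBdag * 𝒞 * ℬ = ℬ ∧ (1 - ℬ * CBdag * 𝒞) * ℬ = 0) := by
  intro ℬ CBdag
  set A := 𝒞 * Y with hA
  have hdet : IsUnit A.det := (Matrix.isUnit_iff_isUnit_det A).mp hCY
  have hdetT : IsUnit Aᵀ.det := by rwa [Matrix.det_transpose]
  have hUnitT : IsUnit Aᵀ := (Matrix.isUnit_iff_isUnit_det _).mpr hdetT
  have hCB : 𝒞 * ℬ = A * V₁ᵀ := by
    show 𝒞 * (Y * V₁ᵀ) = A * V₁ᵀ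
    rw [hA, Matrix.mul_assoc]
  have h1 : 𝒞 * ℬ * (𝒞 * ℬ)ᵀ = A * Aᵀ := by
    rw [hCB, Matrix.transpose_mul, Matrix.transpose_transpose, Matrix.mul_assoc,
      ← Matrix.mul_assoc V₁ᵀ V₁ Aᵀ, hV, Matrix.one_mul]
  have hBBT : ℬ * (𝒞 * ℬ)ᵀ = Y * Aᵀ := by
    show Y * V₁ᵀ * (𝒞 * ℬ)ᵀ = Y * Aᵀ
    rw [hCB, Matrix.transpose_mul, Matrix.transpose_transpose, Matrix.mul_assoc,
      ← Matrix.mul_assoc V₁ᵀ V₁ Aᵀ, hV, Matrix.one_mul]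
  have h2 : ℬ * CBdag = Y * A⁻¹ := by
    show ℬ * ((𝒞 * ℬ)ᵀ * (𝒞 * ℬ * (𝒞 * ℬ)ᵀ)⁻¹) = Y * A⁻¹
    rw [h1, Matrix.mul_inv_rev, ← Matrix.mul_assoc, hBBT, Matrix.mul_assoc Y,
      ← Matrix.mul_assoc Aᵀ, Matrix.mul_nonsing_inv _ hdetT, Matrix.one_mul]
  have h3 : ℬ * CBdag * 𝒞 * ℬ = ℬ := by
    show ℬ * CBdag * 𝒞 * (Y * V₁ᵀ) = ℬ
    rw [h2, Matrix.mul_assoc (Y * A⁻¹) 𝒞 (Y * V₁ᵀ), ← Matrix.mul_assoc 𝒞 Y V₁ᵀ, ← hA,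
      Matrix.mul_assoc Y A⁻¹ (A * V₁ᵀ), ← Matrix.mul_assoc A⁻¹ A V₁ᵀ,
      Matrix.nonsing_inv_mul _ hdet, Matrix.one_mul]
  refine ⟨⟨h1, h1 ▸ hCY.mul hUnitT⟩, h2, h3, ?_⟩
  rw [Matrix.sub_mul, Matrix.one_mul, Matrix.mul_assoc, sub_eq_zero]
  rw [← Matrix.mul_assoc]
  exact h3.symm
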